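/- Let K be a field of characteristic 2, V a finite-dimensional F₂-vector space with non-degenerate alternate form B, and g the Kaplansky algebra over K with basis {e_u : u ∈ Γ} for a J-system Γ. Define ĝ = g ⊕ (K ⊗ V*) with brackets [α,β] = 0, [α, e_u] = α(u) e_u for α, β ∈ V*, and squaring (aα)^{[2]} = a²α, (a e_u)^{[2]} = a² B_u, where B_u ∈ V* is v ↦ B(u,v). Then the squaring is compatible with the bracket: [x^{[2]}, y] = [x,[x,y]] for x = a e_u and any basis element y = e_v or y = β ∈ V*. -/

import Mathlib

open Finset

/-- Embedding of `F₂` into `K`. -/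
def z2k (K : Type*) [Field K] (a : ZMod 2) : K := if a = 1 then 1 else 0

/-- The restricted closure `ĝ = g ⊕ (K ⊗ V*)` of a Kaplansky algebra: first
component spanned by `{e_u : u ∈ Γ}`, second the space of `K`-valued functionals
on `V` (containing `K ⊗ V*`). -/
abbrev hatg (K : Type*) {n : ℕ} (Γ : Finset (Fin n → ZMod 2)) :=
  ({u // u ∈ Γ} → K) × ((Fin n → ZMod 2) → K)

variable {K : Type*} [Field K] {n : ℕ}

/-- The bracket on `ĝ`: the Kaplansky bracket on `g`, `[α,β] = 0`, and
`[α, e_u] = α(u) e_u`. -/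
def hbr (B : (Fin n → ZMod 2) → (Fin n → ZMod 2) → ZMod 2)
    (Γ : Finset (Fin n → ZMod 2)) (x y : hatg K Γ) : hatg K Γ :=
  ((fun w : {u // u ∈ Γ} => ∑ u : {u // u ∈ Γ}, ∑ v : {u // u ∈ Γ},
      x.1 u * y.1 v *
        (if u.1 ≠ v.1 ∧ u.1 + v.1 ∈ Γ ∧ w.1 = u.1 + v.1
          then z2k K (B u v) else 0))
    + (fun w : {u // u ∈ Γ} => x.2 w.1 * y.1 w + y.2 w.1 * x.1 w),
   0)

/-- The basis element `e_u ∈ ĝ`. -/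
def eb (Γ : Finset (Fin n → ZMod 2)) (u : {u // u ∈ Γ}) : hatg K Γ :=
  (fun w => if w = u then 1 else 0, 0)

/-- An element `β ∈ K ⊗ V* ⊂ ĝ`. -/
def dualel (Γ : Finset (Fin n → ZMod 2)) (β : (Fin n → ZMod 2) → K) : hatg K Γ :=
  (0, β)

/-- The square `(a e_u)^{[2]} = a² B_u ∈ V*`, where `B_u : v ↦ B(u,v)`. -/
def sqe (B : (Fin n → ZMod 2) → (Fin n → ZMod 2) → ZMod 2)
    (Γ : Finset (Fin n → ZMod 2)) (a : K) (u : {u // u ∈ Γ}) : hatg K Γ :=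
  (0, fun v => a * a * z2k K (B u v))

/-- for a non-degenerate alternate symmetric bilinear form `B` on a
finite-dimensional `F₂`-space and a J-system `Γ`, the squaring of the restricted
closure `ĝ` is compatible with the bracket: `[x^{[2]}, y] = [x,[x,y]]` for
`x = a e_u` and `y = e_v` or `y = β ∈ V*`. -/
theorem stmt17 (K : Type*) [Field K] [CharP K 2] {n : ℕ}
    (B : LinearMap.BilinForm (ZMod 2) (Fin n → ZMod 2))
    (hsym : ∀ u v, B u v = B v u) (halt : ∀ w, B w w = 0)
    (hnd : ∀ u, (∀ v, B u v = 0) → u = 0)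
    (Γ : Finset (Fin n → ZMod 2)) (h0 : (0 : Fin n → ZMod 2) ∉ Γ)
    (hJ : ∀ u v, u ∈ Γ → v ∈ Γ → u ≠ v → B u v = 1 → u + v ∈ Γ)
    (a : K) (u v : {u // u ∈ Γ}) (β : (Fin n → ZMod 2) → K) :
    hbr (fun x y => B x y) Γ (sqe (fun x y => B x y) Γ a u) (eb Γ v)
      = hbr (fun x y => B x y) Γ (a • eb Γ u)
          (hbr (fun x y => B x y) Γ (a • eb Γ u) (eb Γ v)) ∧
    hbr (fun x y => B x y) Γ (sqe (fun x y => B x y) Γ a u) (dualel Γ β)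
      = hbr (fun x y => B x y) Γ (a • eb Γ u)
          (hbr (fun x y => B x y) Γ (a • eb Γ u) (dualel Γ β)) := by
  have hadd : ∀ w : Fin n → ZMod 2, w + w = 0 := by
    intro w; funext i; exact CharTwo.add_self_eq_zero (w i)
  have h2 : ∀ x : ZMod 2, x = 0 ∨ x = 1 := by decide
  constructor
  · -- part 1
    unfold hbr sqe eb
    refine Prod.ext ?_ rfl
    funext w
    simp only [Prod.fst, Prod.snd, Pi.add_apply, Prod.smul_fst, Pi.smul_apply, smul_eq_mul,
      Prod.smul_snd, Pi.zero_apply, zero_mul, mul_zero, Finset.sum_const_zero, add_zero, mul_ite,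
      ite_mul, zero_add, mul_one, smul_zero]
    simp only [ite_self, Finset.sum_const_zero, add_zero, zero_add]
    rw [Fintype.sum_eq_single u (fun x hx => Finset.sum_eq_zero fun x1 _ => by simp [hx])]
    have hinner : ∀ x : {u // u ∈ Γ}, (∑ x_1 : { u // u ∈ Γ }, ∑ x_2 : { u // u ∈ Γ },
        if (↑x_1 : Fin n → ZMod 2) ≠ ↑x_2 ∧ (↑x_1 : Fin n → ZMod 2) + ↑x_2 ∈ Γ ∧ (↑x : Fin n → ZMod 2) = ↑x_1 + ↑x_2 then
          if x_2 = v then if x_1 = u then a * z2k K ((B ↑x_1) ↑x_2) else 0 else 0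
        else 0)
        = if (↑u : Fin n → ZMod 2) ≠ ↑v ∧ (↑u : Fin n → ZMod 2) + ↑v ∈ Γ ∧ (↑x : Fin n → ZMod 2) = ↑u + ↑v
          then a * z2k K ((B ↑u) ↑v) else 0 := fun x => by
      rw [Fintype.sum_eq_single u (fun x1 hx1 => Finset.sum_eq_zero fun x2 _ => by simp [hx1])]
      rw [Fintype.sum_eq_single v (fun x2 hx2 => by simp [hx2])]
      simp
    simp only [hinner, if_pos (rfl : u = u)]
    rcases h2 ((B ↑u) ↑v) with hB | hB
    · have hz : z2k K ((B ↑u) ↑v) = 0 := by simp [z2k, hB]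
      rw [Finset.sum_eq_zero (fun x _ => by simp [hz])]
      by_cases hwv : w = v
      · subst hwv; simp [hz]
      · simp [hwv]
    · by_cases huv : (↑u : Fin n → ZMod 2) = ↑v
      · rw [huv, halt] at hB; exact absurd hB (by decide)
      · have hmem : (↑u : Fin n → ZMod 2) + ↑v ∈ Γ := hJ _ _ u.2 v.2 huv hB
        have hv0 : (↑v : Fin n → ZMod 2) ≠ 0 := fun h => h0 (h ▸ v.2)
        have hsum2 : (↑u : Fin n → ZMod 2) + (↑u + ↑v) = ↑v := by
          rw [← add_assoc, hadd, zero_add]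
        have hne2 : (↑u : Fin n → ZMod 2) ≠ ↑u + ↑v := fun h => hv0 (by rw [← hsum2, ← h, hadd])
        have hB2 : (B ↑u) (↑u + ↑v) = 1 := by rw [map_add, halt, hB, zero_add]
        have hz1 : z2k K ((B ↑u) ↑v) = 1 := by simp [z2k, hB]
        have hz2 : z2k K ((B ↑u) (↑u + ↑v)) = 1 := by simp [z2k, hB2]
        rw [Fintype.sum_eq_single (⟨↑u + ↑v, hmem⟩ : {x // x ∈ Γ}) (fun x hx => by
          have hne3 : (↑x : Fin n → ZMod 2) ≠ ↑u + ↑v := fun h => hx (Subtype.ext h)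
          simp [hne3])]
        by_cases hwv : w = v
        · subst hwv
          simp [hne2, hsum2, huv, hmem, hz1, hz2, w.2, halt, hB, z2k]
        · have hne4 : (↑w : Fin n → ZMod 2) ≠ ↑v := fun h => hwv (Subtype.ext h)
          simp [hwv, hsum2, hne4]
  · -- part 2
    unfold hbr sqe eb dualel
    refine Prod.ext ?_ rfl
    funext w
    simp only [Prod.fst, Prod.snd, Pi.add_apply, Prod.smul_fst, Pi.smul_apply, smul_eq_mul,
      Prod.smul_snd, Pi.zero_apply, zero_mul, mul_zero, Finset.sum_const_zero, add_zero, mul_ite,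
      ite_mul, zero_add, mul_one, smul_zero, zero_add]
    simp only [ite_self, Finset.sum_const_zero, add_zero, zero_add]
    symm
    refine Finset.sum_eq_zero fun x _ => Finset.sum_eq_zero fun x1 _ => ?_
    by_cases h1 : (↑x : Fin n → ZMod 2) ≠ ↑x1 ∧ (↑x : Fin n → ZMod 2) + ↑x1 ∈ Γ ∧ (↑w : Fin n → ZMod 2) = ↑x + ↑x1
    · by_cases h2 : x = u
      · by_cases h3 : x1 = u
        · exact absurd (h3 ▸ h2 ▸ rfl : (↑x:Fin n → ZMod 2) = ↑x1) h1.1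
        · simp [h1, h2, h3]
      · simp [h1, h2]
    · simp [h1]
      intro hne _ _ hxu hx1u
      exact absurd (hxu.trans hx1u.symm) hne
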